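/- arXiv:1507.05548 — 2 statements merged into one kernel-verified Lean document; each statement's English description precedes it below -/
import Mathlib

section
/- (Plünnecke–Ruzsa inequality, multiplicative form) Let Y, X₁, …, X_k be finite nonempty subsets of an abelian group written multiplicatively. Then |X₁ X₂ ⋯ X_k| ≤ (∏_{i=1}^k |Y X_i|) / |Y|^{k−1}. -/
open Pointwise Finset Fintype

/-- ℕ-valued Bernoulli-type inequality: `b^t * (b + t) ≤ (b+1)^t * b`. -/
private lemma nat_bernoulli (b t : ℕ) : b ^ t * (b + t) ≤ (b + 1) ^ t * b := by
  induction t with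
  | zero => simp
  | succ t ih =>
    have h1 : b ^ t * b ≤ b ^ t * (b + t) := Nat.mul_le_mul_left _ (Nat.le_add_right b t)
    calc b ^ (t + 1) * (b + (t + 1)) = b * (b ^ t * (b + t)) + b ^ t * b := by ring
      _ ≤ b * ((b + 1) ^ t * b) + (b + 1) ^ t * b := by
          exact Nat.add_le_add (Nat.mul_le_mul_left _ ih) (h1.trans ih)
      _ = (b + 1) ^ (t + 1) * b := by ring

/-- If `a^(m*N) ≤ c * b^(m*N)` for all `N`, with `m, b ≥ 1`, then `a ≤ b`. -/
private lemma le_of_pow_le_const_mul_pow (a b c m : ℕ) (hm : 1 ≤ m) (hb : 1 ≤ b)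
    (h : ∀ N, a ^ (m * N) ≤ c * b ^ (m * N)) : a ≤ b := by
  by_contra hab
  push_neg at hab
  set N := c * b + 1 with hN
  set t := m * N with ht
  have htN : N ≤ t := Nat.le_mul_of_pos_left N hm
  have hba : b + 1 ≤ a := hab
  have h1 : (b + 1) ^ t ≤ c * b ^ t := (Nat.pow_le_pow_left hba t).trans (h N)
  have h2 : b ^ t * (b + t) ≤ c * b ^ t * b := (nat_bernoulli b t).trans (by
    calc (b + 1) ^ t * b ≤ c * b ^ t * b := Nat.mul_le_mul_right _ h1)
  have hbt : 0 < b ^ t := pow_pos hb t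
  have h3 : b + t ≤ c * b := by
    have := h2
    rw [show c * b ^ t * b = b ^ t * (c * b) by ring] at this
    exact Nat.le_of_mul_le_mul_left this hbt
  omega

/-- A product of finsets, each contained in `T`, is contained in `T ^ s.card`. -/
private lemma prod_subset_pow {H : Type*} [CommMonoid H] [DecidableEq H] {ι : Type*}
    [DecidableEq ι] (s : Finset ι) (f : ι → Finset H) (T : Finset H)
    (hf : ∀ i ∈ s, f i ⊆ T) : ∏ i ∈ s, f i ⊆ T ^ s.card := by
  induction s using Finset.induction with
  | empty => simp
  | @insert x s' hx ih =>
    rw [Finset.prod_insert hx, Finset.card_insert_of_notMem hx, pow_succ]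
    rw [mul_comm (T ^ s'.card) T]
    exact mul_subset_mul (hf x (Finset.mem_insert_self _ _))
      (ih fun i hi => hf i (Finset.mem_insert_of_mem hi))

/-- Product of `piFinset`s is the `piFinset` of pointwise products. -/
private lemma piFinset_prod {ι κ : Type*} [Fintype ι] [DecidableEq ι] [Fintype κ]
    [DecidableEq κ] {H : Type*} [CommMonoid H] [DecidableEq H] (f : κ → ι → Finset H) :
    ∏ j : κ, piFinset (fun i => f j i) = piFinset (fun i => ∏ j : κ, f j i) := by
  classical
  have : ∀ s : Finset κ, ∏ j ∈ s, piFinset (fun i => f j i)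
      = piFinset (fun i => ∏ j ∈ s, f j i) := by
    intro s
    induction s using Finset.induction with
    | empty =>
      simp only [Finset.prod_empty]
      ext g
      simp [Finset.mem_one, funext_iff]
    | @insert x s' hx ih =>
      rw [Finset.prod_insert hx, ih]
      rw [show (fun i => ∏ j ∈ insert x s', f j i)
        = fun i => f x i * ∏ j ∈ s', f j i from funext fun i => Finset.prod_insert hx]
      rw [Fintype.piFinset_mul]
  exact this univ

/-- The crude multi-set Plünnecke–Ruzsa bound, with an extra factor `(n+1)^(n+1)`. -/
private lemma lemA {H : Type*} [CommGroup H] [DecidableEq H] (n : ℕ)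
    (Y : Finset H) (X : Fin (n + 1) → Finset H) (hY : Y.Nonempty) :
    (∏ i, X i).card ^ (n + 1) * Y.card ^ ((n + 1) * n)
      ≤ ((n + 1) * ∏ i, (Y * X i).card) ^ (n + 1) := by
  classical
  set A : Finset (Fin (n + 1) → H) := piFinset (fun _ => Y) with hAdef
  set B : Fin (n + 1) → Finset (Fin (n + 1) → H) :=
    fun j => piFinset (fun i => X (i + j)) with hBdef
  set B' : Finset (Fin (n + 1) → H) := univ.biUnion B with hB'def
  have hA : A.Nonempty := by
    rw [hAdef, Fintype.piFinset_nonempty]; exact fun _ => hY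
  have hAcard : A.card = Y.card ^ (n + 1) := by
    rw [hAdef, Fintype.card_piFinset]; simp
  -- the product of the shifted boxes is the constant box of the full product
  have hprodB : ∏ j, B j = piFinset (fun _ => ∏ i, X i) := by
    rw [hBdef, piFinset_prod]
    congr 1
    funext i
    exact Fintype.prod_equiv (Equiv.addLeft i) _ _ (fun j => rfl)
  have hsub : piFinset (fun _ : Fin (n + 1) => ∏ i, X i) ⊆ B' ^ (n + 1) := by
    have h := prod_subset_pow univ B B'
      (fun j _ => Finset.subset_biUnion_of_mem B (mem_univ j))
    rw [Finset.card_univ, Fintype.card_fin] at h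
    rw [← hprodB]
    exact h
  have hScard : (∏ i, X i).card ^ (n + 1) ≤ (B' ^ (n + 1)).card := by
    calc (∏ i, X i).card ^ (n + 1)
        = (piFinset (fun _ : Fin (n + 1) => ∏ i, X i)).card := by
          rw [Fintype.card_piFinset]; simp
      _ ≤ (B' ^ (n + 1)).card := Finset.card_le_card hsub
  -- |A * B'| ≤ (n+1) * ∏ |Y Xᵢ|
  have hABj : ∀ j, (A * B j).card = ∏ i, (Y * X i).card := by
    intro j
    rw [hAdef, hBdef, ← Fintype.piFinset_mul, Fintype.card_piFinset]
    exact Fintype.prod_equiv (Equiv.addRight j) _ _ (fun i => rfl)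
  have hAB' : (A * B').card ≤ (n + 1) * ∏ i, (Y * X i).card := by
    have hsub2 : A * B' ⊆ univ.biUnion (fun j => A * B j) := by
      rw [Finset.mul_subset_iff]
      intro x hx y hy
      rw [hB'def, Finset.mem_biUnion] at hy
      obtain ⟨j, -, hyj⟩ := hy
      exact Finset.mem_biUnion.2 ⟨j, mem_univ j, Finset.mul_mem_mul hx hyj⟩
    calc (A * B').card ≤ (univ.biUnion (fun j => A * B j)).card := Finset.card_le_card hsub2
      _ ≤ ∑ j : Fin (n + 1), (A * B j).card := Finset.card_biUnion_le
      _ = (n + 1) * ∏ i, (Y * X i).card := by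
          rw [Finset.sum_congr rfl (fun j _ => hABj j)]; simp [Finset.sum_const, mul_comm]
  -- single-set Plünnecke–Ruzsa in the product group
  have hPR := Finset.pluennecke_ruzsa_inequality_pow_mul hA B' (n + 1)
  have hAne : ((A.card : ℚ≥0)) ≠ 0 := by
    exact_mod_cast hA.card_pos.ne'
  have hnat : (B' ^ (n + 1)).card * A.card ^ n ≤ (A * B').card ^ (n + 1) := by
    have hq : ((B' ^ (n + 1)).card * A.card ^ n : ℚ≥0) ≤ ((A * B').card : ℚ≥0) ^ (n + 1) := by
      calc ((B' ^ (n + 1)).card * A.card ^ n : ℚ≥0)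
          ≤ (((A * B').card / A.card) ^ (n + 1) * A.card) * A.card ^ n := by
            exact mul_le_mul_of_nonneg_right hPR (by positivity)
        _ = ((A * B').card : ℚ≥0) ^ (n + 1) := by
            rw [div_pow, div_mul_eq_mul_div, div_mul_eq_mul_div, div_eq_iff (pow_ne_zero _ hAne)]
            ring
    exact_mod_cast hq
  calc (∏ i, X i).card ^ (n + 1) * Y.card ^ ((n + 1) * n)
      = (∏ i, X i).card ^ (n + 1) * A.card ^ n := by rw [hAcard, ← pow_mul]
    _ ≤ (B' ^ (n + 1)).card * A.card ^ n := Nat.mul_le_mul_right _ hScard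
    _ ≤ (A * B').card ^ (n + 1) := hnat
    _ ≤ ((n + 1) * ∏ i, (Y * X i).card) ^ (n + 1) := Nat.pow_le_pow_left hAB' _

/-- Plünnecke–Ruzsa inequality (multiplicative form):
`|X₁⋯X_k| · |Y|^(k-1) ≤ ∏ᵢ |Y Xᵢ|`. -/
theorem plunnecke_ruzsa_mul {G : Type*} [CommGroup G] [DecidableEq G] (k : ℕ)
    (Y : Finset G) (X : Fin k → Finset G) (hY : Y.Nonempty) (hX : ∀ i, (X i).Nonempty) :
    (∏ i, X i).card * Y.card ^ (k - 1) ≤ ∏ i, (Y * X i).card := by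
  classical
  obtain _ | n := k
  · simp
  -- k = n + 1
  set S := (∏ i, X i).card with hSdef
  set P := ∏ i, (Y * X i).card with hPdef
  have hP : 1 ≤ P := by
    rw [hPdef]
    exact Finset.prod_pos (fun i _ => (hY.mul (hX i)).card_pos)
  -- the tensor-power trick: apply lemA in `Fin N → G`
  have key : ∀ N : ℕ, (S * Y.card ^ n) ^ ((n + 1) * N) ≤ (n + 1) ^ (n + 1) * P ^ ((n + 1) * N) := by
    intro N
    have h := lemA n (piFinset (fun _ : Fin N => Y)) (fun i => piFinset (fun _ : Fin N => X i))
      (Fintype.piFinset_nonempty.2 fun _ => hY)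
    have e1 : (∏ i, piFinset (fun _ : Fin N => X i)) = piFinset (fun _ : Fin N => ∏ i, X i) :=
      piFinset_prod _
    have e2 : (piFinset (fun _ : Fin N => ∏ i, X i)).card = S ^ N := by
      rw [Fintype.card_piFinset]; simp [hSdef]
    have e3 : (piFinset (fun _ : Fin N => Y)).card = Y.card ^ N := by
      rw [Fintype.card_piFinset]; simp
    have e4 : ∀ i, (piFinset (fun _ : Fin N => Y) * piFinset (fun _ : Fin N => X i)).card
        = (Y * X i).card ^ N := by
      intro i
      rw [← Fintype.piFinset_mul, Fintype.card_piFinset]; simp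
    rw [e1, e2, e3] at h
    rw [Finset.prod_congr rfl (fun i _ => e4 i), Finset.prod_pow] at h
    calc (S * Y.card ^ n) ^ ((n + 1) * N)
        = (S ^ N) ^ (n + 1) * (Y.card ^ N) ^ ((n + 1) * n) := by ring
      _ ≤ ((n + 1) * P ^ N) ^ (n + 1) := h
      _ = (n + 1) ^ (n + 1) * P ^ ((n + 1) * N) := by
          rw [mul_pow, ← pow_mul, mul_comm N (n + 1)]
  have := le_of_pow_le_const_mul_pow (S * Y.card ^ n) P ((n + 1) ^ (n + 1)) (n + 1)
    (Nat.succ_le_succ (Nat.zero_le n)) hP key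
  simpa [hSdef, hPdef] using this
end

section
/- (Konyagin-type bound) Let G be a multiplicative subgroup of 𝔽_q^* and let ψ be a nontrivial additive character of 𝔽_q. Then |Σ_{g ∈ G} ψ(g)| ≤ q^{1/8} · E(G)^{1/4}, where E(G) is the additive energy of G. -/
open Pointwise

/-- The additive energy `E(X,Y)`. -/
def addEnergy {G : Type*} [AddCommGroup G] [DecidableEq G] (X Y : Finset G) : ℕ :=
  ((X ×ˢ Y ×ˢ X ×ˢ Y).filter fun t => t.1 + t.2.1 = t.2.2.1 + t.2.2.2).card

/-- Konyagin-type bound: for a multiplicative subgroup `G ≤ 𝔽_q^*` and a nontrivial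
additive character `ψ`, `|∑_{g∈G} ψ(g)| ≤ q^{1/8} E(G)^{1/4}`. -/
theorem konyagin_character_sum_bound {F : Type*} [Field F] [Fintype F] [DecidableEq F]
    (G : Finset F) (h0 : (0 : F) ∉ G) (h1 : (1 : F) ∈ G)
    (hmul : ∀ x ∈ G, ∀ y ∈ G, x * y ∈ G) (hinv : ∀ x ∈ G, x⁻¹ ∈ G)
    (ψ : AddChar F ℂ) (hψ : ψ ≠ 1) :
    ‖∑ g ∈ G, ψ g‖ ≤
      (Fintype.card F : ℝ) ^ ((1 : ℝ) / 8) * (addEnergy G G : ℝ) ^ ((1 : ℝ) / 4) := by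
  classical
  set q : ℕ := Fintype.card F with hqdef
  set S : ℂ := ∑ g ∈ G, ψ g with hSdef
  set n : ℕ := G.card with hndef
  set E : ℕ := addEnergy G G with hEdef
  set s : F → ℕ := fun x => ((G ×ˢ G).filter fun p => p.1 + p.2 = x).card with hsdef
  set T : F → ℂ := fun a => ∑ g ∈ G, ψ (a * g) with hTdef
  -- multiplicative invariance of the representation function
  have hs_inv : ∀ t ∈ G, ∀ x : F, s (t * x) = s x := by
    intro t ht x
    have ht0 : t ≠ 0 := fun h => h0 (h ▸ ht)
    refine Finset.card_nbij' (fun p => (t⁻¹ * p.1, t⁻¹ * p.2)) (fun p => (t * p.1, t * p.2))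
      ?_ ?_ ?_ ?_
    · rintro ⟨a, b⟩ hab
      simp only [Finset.mem_coe, Finset.mem_filter, Finset.mem_product] at hab ⊢
      refine ⟨⟨hmul _ (hinv t ht) _ hab.1.1, hmul _ (hinv t ht) _ hab.1.2⟩, ?_⟩
      field_simp
      linear_combination hab.2
    · rintro ⟨a, b⟩ hab
      simp only [Finset.mem_coe, Finset.mem_filter, Finset.mem_product] at hab ⊢
      exact ⟨⟨hmul t ht a hab.1.1, hmul t ht b hab.1.2⟩, by rw [← mul_add, hab.2]⟩
    · rintro ⟨a, b⟩ _
      field_simp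
    · rintro ⟨a, b⟩ _
      field_simp
  -- the pair form of the additive energy
  have hEpairs : (((G ×ˢ G) ×ˢ (G ×ˢ G)).filter
      fun pq : (F × F) × F × F => pq.1.1 + pq.1.2 = pq.2.1 + pq.2.2).card = E := by
    rw [hEdef]
    unfold _root_.addEnergy
    refine Finset.card_nbij' (fun pq => (pq.1.1, pq.1.2, pq.2.1, pq.2.2))
      (fun t => ((t.1, t.2.1), (t.2.2.1, t.2.2.2))) ?_ ?_ ?_ ?_ <;>
      intro p hp <;>
      simp only [Finset.mem_coe, Finset.mem_filter, Finset.mem_product] at hp ⊢ <;> tauto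
  -- first moment of s
  have hs_sum : ∑ x : F, s x = n ^ 2 := by
    have h := Finset.card_eq_sum_card_fiberwise
      (f := fun p : F × F => p.1 + p.2) (s := G ×ˢ G) (t := Finset.univ)
      (fun p _ => Finset.mem_univ _)
    rw [Finset.card_product] at h
    simp only [hsdef]
    rw [← h, hndef]
    ring
  -- second moment of s is the additive energy
  have hs_sq : ∑ x : F, s x ^ 2 = E := by
    rw [← hEpairs]
    have key := Finset.card_eq_sum_card_fiberwise
      (f := fun pq : (F × F) × F × F => pq.1.1 + pq.1.2)
      (s := ((G ×ˢ G) ×ˢ (G ×ˢ G)).filter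
        fun pq : (F × F) × F × F => pq.1.1 + pq.1.2 = pq.2.1 + pq.2.2)
      (t := Finset.univ) (fun p _ => Finset.mem_univ _)
    rw [key]
    refine Finset.sum_congr rfl fun x _ => ?_
    have hset : (((G ×ˢ G) ×ˢ (G ×ˢ G)).filter
        fun pq : (F × F) × F × F => pq.1.1 + pq.1.2 = pq.2.1 + pq.2.2).filter
        (fun pq => pq.1.1 + pq.1.2 = x) =
        ((G ×ˢ G).filter fun p : F × F => p.1 + p.2 = x) ×ˢ
        ((G ×ˢ G).filter fun p : F × F => p.1 + p.2 = x) := by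
      ext ⟨⟨a, b⟩, ⟨c, d⟩⟩
      simp only [Finset.mem_filter, Finset.mem_product]
      constructor
      · rintro ⟨⟨⟨hm1, hm2⟩, h3⟩, h4⟩
        exact ⟨⟨hm1, h4⟩, hm2, h3 ▸ h4⟩
      · rintro ⟨⟨hm1, h2⟩, hm3, h4⟩
        exact ⟨⟨⟨hm1, hm3⟩, h2.trans h4.symm⟩, h2⟩
    rw [hset, Finset.card_product, sq]
  -- expansion of S^2
  have hS2 : S ^ 2 = ∑ x : F, (s x : ℂ) * ψ x := by
    have expand : S ^ 2 = ∑ p ∈ G ×ˢ G, ψ (p.1 + p.2) := by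
      rw [sq, hSdef, Finset.sum_mul_sum, ← Finset.sum_product']
      exact Finset.sum_congr rfl fun p _ => (ψ.map_add_eq_mul p.1 p.2).symm
    rw [expand,
      ← Finset.sum_fiberwise_of_maps_to (g := fun p : F × F => p.1 + p.2)
        (t := Finset.univ) (fun p _ => Finset.mem_univ _) (fun p => ψ (p.1 + p.2))]
    refine Finset.sum_congr rfl fun x _ => ?_
    rw [Finset.sum_congr rfl (g := fun _ => ψ x)
      (fun p hp => by rw [(Finset.mem_filter.1 hp).2]), Finset.sum_const, nsmul_eq_mul]
  -- the key identity
  have hkey : (n : ℂ) * S ^ 2 = ∑ x : F, (s x : ℂ) * T x := by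
    have swap : ∑ x : F, (s x : ℂ) * T x = ∑ g ∈ G, ∑ x : F, (s x : ℂ) * ψ (x * g) := by
      simp only [hTdef, Finset.mul_sum]
      rw [Finset.sum_comm]
    rw [swap]
    have hfix : ∀ g ∈ G, ∑ x : F, (s x : ℂ) * ψ (x * g) = S ^ 2 := by
      intro g hg
      have hg0 : g ≠ 0 := fun h => h0 (h ▸ hg)
      have e := Equiv.sum_comp (Equiv.mulRight₀ g⁻¹ (inv_ne_zero hg0))
        (fun x => (s x : ℂ) * ψ (x * g))
      rw [← e, hS2]
      refine Finset.sum_congr rfl fun y _ => ?_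
      have h1 : s (y * g⁻¹) = s y := by
        rw [mul_comm y g⁻¹]
        exact hs_inv g⁻¹ (hinv g hg) y
      have h2 : (y * g⁻¹) * g = y := by field_simp
      simp only [Equiv.mulRight₀_apply]
      rw [h1, h2]
    rw [Finset.sum_congr rfl hfix, Finset.sum_const, nsmul_eq_mul]
  -- fourth moment of T
  have hT2 : ∀ a : F, T a ^ 2 = ∑ p ∈ G ×ˢ G, ψ (a * (p.1 + p.2)) := by
    intro a
    rw [sq, hTdef, Finset.sum_mul_sum, ← Finset.sum_product']
    exact Finset.sum_congr rfl fun p _ => by rw [mul_add, ψ.map_add_eq_mul]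
  have hnorm4 : ∀ z : ℂ, ((‖z‖ ^ 4 : ℝ) : ℂ) = z ^ 2 * (starRingEnd ℂ) (z ^ 2) := by
    intro z
    rw [Complex.mul_conj]
    norm_cast
    rw [Complex.normSq_eq_norm_sq, norm_pow]
    ring
  have hT4 : ∑ a : F, ‖T a‖ ^ 4 = (q : ℝ) * E := by
    have hc : ∀ a : F, ((‖T a‖ ^ 4 : ℝ) : ℂ) =
        ∑ pq ∈ (G ×ˢ G) ×ˢ (G ×ˢ G),
          ψ (a * ((pq.1.1 + pq.1.2) - (pq.2.1 + pq.2.2))) := by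
      intro a
      rw [hnorm4, hT2]
      rw [map_sum, Finset.sum_mul_sum, ← Finset.sum_product']
      refine Finset.sum_congr rfl fun pq _ => ?_
      rw [← AddChar.map_neg_eq_conj, ← ψ.map_add_eq_mul, mul_sub]
      ring_nf
    have hcomplex : ((∑ a : F, ‖T a‖ ^ 4 : ℝ) : ℂ) = ((q : ℝ) * E : ℝ) := by
      push_cast
      calc ∑ a : F, ((‖T a‖ : ℂ) ^ 4)
          = ∑ a : F, ∑ pq ∈ (G ×ˢ G) ×ˢ (G ×ˢ G),
              ψ (a * ((pq.1.1 + pq.1.2) - (pq.2.1 + pq.2.2))) := by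
            refine Finset.sum_congr rfl fun a _ => ?_
            have := hc a
            push_cast at this
            exact this
        _ = ∑ pq ∈ (G ×ˢ G) ×ˢ (G ×ˢ G), ∑ a : F,
              ψ (a * ((pq.1.1 + pq.1.2) - (pq.2.1 + pq.2.2))) := Finset.sum_comm
        _ = ∑ pq ∈ (G ×ˢ G) ×ˢ (G ×ˢ G),
              if ((pq.1.1 + pq.1.2) - (pq.2.1 + pq.2.2)) = 0 then (q : ℂ) else 0 := by
            refine Finset.sum_congr rfl fun pq _ => ?_
            have := AddChar.sum_mulShift ((pq.1.1 + pq.1.2) - (pq.2.1 + pq.2.2))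
              (AddChar.IsPrimitive.of_ne_one hψ)
            rw [this]
            simp only [apply_ite (Nat.cast : ℕ → ℂ), Nat.cast_zero]
            rfl
        _ = (q : ℂ) * E := by
            rw [← Finset.sum_filter, Finset.sum_const]
            have : ((G ×ˢ G) ×ˢ (G ×ˢ G)).filter
                (fun pq : (F × F) × F × F => (pq.1.1 + pq.1.2) - (pq.2.1 + pq.2.2) = 0) =
                ((G ×ˢ G) ×ˢ (G ×ˢ G)).filter
                (fun pq : (F × F) × F × F => pq.1.1 + pq.1.2 = pq.2.1 + pq.2.2) := by
              refine Finset.filter_congr fun pq _ => ?_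
              simp [sub_eq_zero]
            rw [this, hEpairs, nsmul_eq_mul, mul_comm]
    exact_mod_cast hcomplex
  -- put everything together with Cauchy–Schwarz (twice)
  have hA : (n : ℝ) * ‖S‖ ^ 2 ≤ ∑ x : F, (s x : ℝ) * ‖T x‖ := by
    have h1 : (n : ℝ) * ‖S‖ ^ 2 = ‖(n : ℂ) * S ^ 2‖ := by
      rw [norm_mul, norm_pow]
      simp
    rw [h1, hkey]
    refine (norm_sum_le _ _).trans_eq ?_
    refine Finset.sum_congr rfl fun x _ => ?_
    rw [norm_mul]
    simp
  have hCS1 : (∑ x : F, (s x : ℝ) * ‖T x‖) ^ 2 ≤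
      (∑ x : F, (s x : ℝ)) * ∑ x : F, (s x : ℝ) * ‖T x‖ ^ 2 := by
    refine Finset.sum_sq_le_sum_mul_sum_of_sq_eq_mul _ ?_ ?_ ?_
    · intro i _; positivity
    · intro i _; positivity
    · intro i _; ring
  have hCS2 : (∑ x : F, (s x : ℝ) * ‖T x‖ ^ 2) ^ 2 ≤
      (∑ x : F, (s x : ℝ) ^ 2) * ∑ x : F, (‖T x‖ ^ 2) ^ 2 :=
    Finset.sum_mul_sq_le_sq_mul_sq _ _ _
  have hsum1 : (∑ x : F, (s x : ℝ)) = (n : ℝ) ^ 2 := by exact_mod_cast hs_sum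
  have hsum2 : (∑ x : F, (s x : ℝ) ^ 2) = (E : ℝ) := by exact_mod_cast hs_sq
  have hsum3 : (∑ x : F, (‖T x‖ ^ 2) ^ 2) = (q : ℝ) * E := by
    rw [← hT4]
    exact Finset.sum_congr rfl fun x _ => by ring
  have hn0 : 0 < (n : ℝ) := by
    have : 0 < n := Finset.card_pos.2 ⟨1, h1⟩
    exact_mod_cast this
  have hE0 : (0 : ℝ) ≤ E := by positivity
  have hq0 : (0 : ℝ) ≤ q := by positivity
  set B : ℝ := ∑ x : F, (s x : ℝ) * ‖T x‖ ^ 2 with hBdef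
  have hB0 : 0 ≤ B := Finset.sum_nonneg fun x _ => by positivity
  have hB2 : B ^ 2 ≤ (q : ℝ) * E ^ 2 := by
    calc B ^ 2 ≤ (E : ℝ) * ((q : ℝ) * E) := by rw [← hsum3, ← hsum2]; exact hCS2
    _ = (q : ℝ) * E ^ 2 := by ring
  have hS4 : ‖S‖ ^ 4 ≤ B := by
    have h2 : ((n : ℝ) * ‖S‖ ^ 2) ^ 2 ≤ (n : ℝ) ^ 2 * B := by
      calc ((n : ℝ) * ‖S‖ ^ 2) ^ 2 ≤ (∑ x : F, (s x : ℝ) * ‖T x‖) ^ 2 :=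
            pow_le_pow_left₀ (by positivity) hA 2
      _ ≤ (n : ℝ) ^ 2 * B := by rw [← hsum1]; exact hCS1
    have h3 : (n : ℝ) ^ 2 * ‖S‖ ^ 4 ≤ (n : ℝ) ^ 2 * B := by
      calc (n : ℝ) ^ 2 * ‖S‖ ^ 4 = ((n : ℝ) * ‖S‖ ^ 2) ^ 2 := by ring
      _ ≤ (n : ℝ) ^ 2 * B := h2
    exact le_of_mul_le_mul_left h3 (pow_pos hn0 2)
  have hS8 : ‖S‖ ^ 8 ≤ (q : ℝ) * E ^ 2 := by
    calc ‖S‖ ^ 8 = (‖S‖ ^ 4) ^ 2 := by ring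
    _ ≤ B ^ 2 := pow_le_pow_left₀ (by positivity) hS4 2
    _ ≤ (q : ℝ) * E ^ 2 := hB2
  -- final rpow manipulation
  have hRHS : ((q : ℝ) ^ ((1 : ℝ) / 8) * (E : ℝ) ^ ((1 : ℝ) / 4)) ^ (8 : ℕ) =
      (q : ℝ) * E ^ 2 := by
    rw [mul_pow, ← Real.rpow_natCast ((q : ℝ) ^ ((1 : ℝ) / 8)) 8,
      ← Real.rpow_natCast ((E : ℝ) ^ ((1 : ℝ) / 4)) 8,
      ← Real.rpow_mul hq0, ← Real.rpow_mul hE0]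
    norm_num
  refine le_of_pow_le_pow_left₀ (n := 8) (by norm_num) (by positivity) ?_
  rw [hRHS]
  exact hS8
end
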